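/- Indexing categories are closed under Cartesian products of morphisms: if O is an indexing category for G and fᵢ : Sᵢ → Tᵢ (i = 1, 2) are in O, then f₁ × f₂ : S₁ × S₂ → T₁ × T₂ is in O. -/

import Mathlib

open CategoryTheory CategoryTheory.Limits

lemma isPullback_prod_map_id {C : Type*} [Category C] [HasBinaryProducts C]
    {X Y : C} (f : X ⟶ Y) (Z : C) :
    IsPullback prod.fst (prod.map f (𝟙 Z)) f prod.fst := by
  refine ⟨⟨by simp⟩, ⟨PullbackCone.IsLimit.mk _ (fun s => prod.lift s.fst (s.snd ≫ prod.snd)) ?_ ?_ ?_⟩⟩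
  · intro s; exact prod.lift_fst _ _
  · intro s
    apply Limits.prod.hom_ext
    · simp only [Category.assoc, prod.map_fst]; erw [prod.lift_fst_assoc]; exact s.condition
    · simp only [Category.assoc, prod.map_snd, Category.comp_id]; exact prod.lift_snd _ _
  · intro s m h1 h2
    apply Limits.prod.hom_ext
    · exact h1.trans (prod.lift_fst _ _).symm
    · have := h2 =≫ prod.snd
      exact (by simpa using this : m ≫ prod.snd = _).trans (prod.lift_snd _ _).symm

lemma isPullback_prod_map_id' {C : Type*} [Category C] [HasBinaryProducts C]
    {X Y : C} (f : X ⟶ Y) (Z : C) :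
    IsPullback prod.snd (prod.map (𝟙 Z) f) f prod.snd := by
  refine ⟨⟨by simp⟩, ⟨PullbackCone.IsLimit.mk _ (fun s => prod.lift (s.snd ≫ prod.fst) s.fst) ?_ ?_ ?_⟩⟩
  · intro s; exact prod.lift_snd _ _
  · intro s
    apply Limits.prod.hom_ext
    · simp only [Category.assoc, prod.map_fst, Category.comp_id]; exact prod.lift_fst _ _
    · simp only [Category.assoc, prod.map_snd]; erw [prod.lift_snd_assoc]; exact s.condition
  · intro s m h1 h2
    apply Limits.prod.hom_ext
    · have := h2 =≫ prod.fst
      exact (by simpa using this : m ≫ prod.fst = _).trans (prod.lift_fst _ _).symm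
    · exact h1.trans (prod.lift_snd _ _).symm

/-- Indexing categories are closed under Cartesian products of morphisms:
if `O` is an indexing category for `G` (wide, pullback-stable,
finite-coproduct-complete, composition-closed subcategory of `G`-sets) and
`f₁, f₂` are in `O`, then so is `f₁ × f₂`. -/
theorem stmt13 (G : Type) [Group G] (O : MorphismProperty (SingleObj G ⥤ Type))
    (hwide : ∀ X : SingleObj G ⥤ Type, O (𝟙 X))
    (hcomp : O.IsStableUnderComposition)
    (hbc : O.IsStableUnderBaseChange)
    (hcoprod : ∀ {A B A' B' : SingleObj G ⥤ Type} (f : A ⟶ A') (g : B ⟶ B'),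
      O f → O g → O (coprod.map f g))
    {S₁ S₂ T₁ T₂ : SingleObj G ⥤ Type} (f₁ : S₁ ⟶ T₁) (f₂ : S₂ ⟶ T₂)
    (hf₁ : O f₁) (hf₂ : O f₂) :
    O (prod.map f₁ f₂) := by
  have h₁ : O (prod.map f₁ (𝟙 S₂)) :=
    MorphismProperty.of_isPullback (isPullback_prod_map_id f₁ S₂) hf₁
  have h₂ : O (prod.map (𝟙 T₁) f₂) :=
    MorphismProperty.of_isPullback (isPullback_prod_map_id' f₂ T₁) hf₂
  have : prod.map f₁ f₂ = prod.map f₁ (𝟙 S₂) ≫ prod.map (𝟙 T₁) f₂ := by simp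
  rw [this]
  exact hcomp.comp_mem _ _ h₁ h₂
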